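/- Let U and V be jointly defined random variables, each distributed as a sum of independent Bernoulli random variables, with E[U] ≤ E[V]. Then P(V ≤ U) ≤ 2·exp( −(√E[V] − √E[U])² / (1+√2) ). -/

import Mathlib

open scoped ENNReal BigOperators
open Filter Asymptotics

namespace ARW

variable {V : Type} [Fintype V] [DecidableEq V]

/-- A sub-stochastic matrix: every row sums to at most `1`. -/
def SubStochastic (K : V → V → ℝ≥0∞) : Prop := ∀ x, ∑ y, K x y ≤ 1

/-- Non-degenerate: no principal sub-matrix of `K` is stochastic. -/
def NonDegenerate (K : V → V → ℝ≥0∞) : Prop :=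
  ∀ S : Finset V, S.Nonempty → ∃ x ∈ S, ∑ y ∈ S, K x y ≠ 1

/-- A probability vector on `V`. -/
def IsProbVec (ν : V → ℝ≥0∞) : Prop := ∑ x, ν x = 1

/-- Probability that the `K`-walk currently at `x` next follows the trajectory `xs`
and is then killed. -/
noncomputable def pathProb (K : V → V → ℝ≥0∞) : V → List V → ℝ≥0∞
  | x, [] => 1 - ∑ y, K x y
  | x, y :: ys => K x y * pathProb K y ys

/-- Probability that a `(K,ν)`-walk has the (finite) full trajectory `w`. -/
noncomputable def walkProb (K : V → V → ℝ≥0∞) (ν : V → ℝ≥0∞) : List V → ℝ≥0∞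
  | [] => 0
  | x :: xs => ν x * pathProb K x xs

/-- `p(x)`: the probability that a `(K,ν)`-walk visits `x` before dying. -/
noncomputable def hitProb (K : V → V → ℝ≥0∞) (ν : V → ℝ≥0∞) (x : V) : ℝ≥0∞ :=
  ∑' w : List V, if x ∈ w then walkProb K ν w else 0

/-- The insertion law `ν` is admissible when every site has a chance of being
visited by a `(K,ν)`-walk. -/
def Admissible (K : V → V → ℝ≥0∞) (ν : V → ℝ≥0∞) : Prop := ∀ x, 0 < hitProb K ν x

/-- The uniform law on `V`. -/
noncomputable def unifLaw (V : Type) [Fintype V] : V → ℝ≥0∞ :=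
  fun _ => (Fintype.card V : ℝ≥0∞)⁻¹

/-! ### IDLA -/

/-- The IDLA update: the walker settles at the first site of its trajectory
which is not already occupied. -/
def idlaUpdate (S : Finset V) : List V → Finset V
  | [] => S
  | x :: xs => if x ∈ S then idlaUpdate S xs else insert x S

/-- The IDLA aggregate obtained from the initial set `A` after using the walks `ws`. -/
def idlaSet (A : Finset V) (ws : List (List V)) : Finset V := ws.foldl idlaUpdate A

/-- `P(T^A > t)`: probability that the IDLA process started from `A` and driven by
i.i.d. `(K,ν)`-walks has not filled `V` after `t` steps. -/
noncomputable def idlaTail (K : V → V → ℝ≥0∞) (ν : V → ℝ≥0∞) (A : Finset V) (t : ℕ) : ℝ≥0∞ :=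
  ∑' ws : Fin t → List V,
    (∏ i, walkProb K ν (ws i)) * (if idlaSet A (List.ofFn ws) = Finset.univ then 0 else 1)

/-- `E[T^A]`: the expected filling time of IDLA started from `A`. -/
noncomputable def idlaMean (K : V → V → ℝ≥0∞) (ν : V → ℝ≥0∞) (A : Finset V) : ℝ≥0∞ :=
  ∑' t : ℕ, idlaTail K ν A t

/-- `Var(T^A)`: the variance of the filling time of IDLA started from `A`. -/
noncomputable def idlaVar (K : V → V → ℝ≥0∞) (ν : V → ℝ≥0∞) (A : Finset V) : ℝ≥0∞ :=
  (∑' t : ℕ, (2 * t + 1) * idlaTail K ν A t) - (idlaMean K ν A) ^ 2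

/-! ### The ARW chain -/

/-- The state of a single site: empty, one sleeping particle, or `n+1` active particles. -/
inductive Site : Type
  | empty : Site
  | sleeping : Site
  | active (n : ℕ) : Site
deriving DecidableEq

/-- A configuration of particles. -/
abbrev Conf (V : Type) := V → Site

def Site.isActive : Site → Bool
  | .active _ => true
  | _ => false

/-- The set of sites holding at least one active particle. -/
def activeSites (η : Conf V) : Finset V := Finset.univ.filter fun x => (η x).isActive

/-- Adding one active particle to a site (waking a sleeping particle if present). -/
def Site.addActive : Site → Site
  | .empty => .active 0
  | .sleeping => .active 1
  | .active n => .active (n + 1)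

/-- Removing one active particle from a site. -/
def Site.removeOne : Site → Site
  | .active (n + 1) => .active n
  | _ => .empty

/-- Adding one active particle at site `y`. -/
def addActiveAt (η : Conf V) (y : V) : Conf V := Function.update η y (η y).addActive

/-- One sequential toppling step of ARW stabilization with sleep rate `lam`:
an active site `x` is selected (if any); if its particle is alone it falls asleep
with probability `lam/(1+lam)`, moves to `y` with probability `K x y/(1+lam)` and
dies with the remaining probability; if it is not alone it moves to `y` with
probability `K x y` and dies with the remaining probability.  Stable
configurations are absorbing. -/
noncomputable def toppleKernel (K : V → V → ℝ≥0∞) (lam : ℝ) (η ξ : Conf V) : ℝ≥0∞ :=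
  if h : (activeSites η).Nonempty then
    let x := h.choose
    let ημ : Conf V := Function.update η x (η x).removeOne
    let move : ℝ≥0∞ := ∑ y, if ξ = addActiveAt ημ y then K x y else 0
    let die : ℝ≥0∞ := if ξ = ημ then 1 - ∑ y, K x y else 0
    if η x = Site.active 0 then
      ((if ξ = Function.update η x Site.sleeping then ENNReal.ofReal lam else 0) + move + die)
        / (ENNReal.ofReal lam + 1)
    else move + die
  else if ξ = η then 1 else 0

/-- Iterates of a sub-probability kernel on configurations. -/
noncomputable def kernelPow (M : Conf V → Conf V → ℝ≥0∞) : ℕ → Conf V → Conf V → ℝ≥0∞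
  | 0 => fun η ξ => if ξ = η then 1 else 0
  | t + 1 => fun η ξ => ∑' σ : Conf V, M η σ * kernelPow M t σ ξ

/-- A stable configuration, seen as a configuration (`true` = sleeping particle). -/
def embed (b : V → Bool) : Conf V := fun x => if b x then Site.sleeping else Site.empty

/-- One step of the `ARW(K,lam,ν)` chain: insert an active particle at a `ν`-distributed
site and stabilize; `arwStep K lam ν η ξ` is the probability of reaching the stable
configuration `ξ` from the stable configuration `η`. -/
noncomputable def arwStep (K : V → V → ℝ≥0∞) (lam : ℝ) (ν : V → ℝ≥0∞)
    (η ξ : V → Bool) : ℝ≥0∞ :=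
  ∑ x, ν x * ⨆ t, kernelPow (toppleKernel K lam) t (addActiveAt (embed η) x) (embed ξ)

/-- The transition matrix of the `ARW(K,lam,ν)` chain on stable configurations. -/
noncomputable def arwMatrix (K : V → V → ℝ≥0∞) (lam : ℝ) (ν : V → ℝ≥0∞) :
    Matrix (V → Bool) (V → Bool) ℝ :=
  Matrix.of fun η ξ => (arwStep K lam ν η ξ).toReal

/-! ### Distances to equilibrium, mixing and relaxation times -/

variable {S : Type} [Fintype S] [DecidableEq S]

/-- `π` is a stationary probability distribution for `P`. -/
def IsStationary (P : Matrix S S ℝ) (π : S → ℝ) : Prop :=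
  (∀ s, 0 ≤ π s) ∧ (∑ s, π s = 1) ∧ ∀ s, ∑ r, π r * P r s = π s

/-- The separation distance to equilibrium at time `t`. -/
noncomputable def sepDist (P : Matrix S S ℝ) (π : S → ℝ) (t : ℕ) : ℝ :=
  ⨆ η, ⨆ ξ, (1 - (P ^ t) η ξ / π ξ)

/-- The separation mixing time with precision `ε`. -/
noncomputable def sepMix (P : Matrix S S ℝ) (π : S → ℝ) (ε : ℝ) : ℕ :=
  sInf {t : ℕ | sepDist P π t ≤ ε}

/-- The total-variation distance to equilibrium at time `t`. -/
noncomputable def tvDist (P : Matrix S S ℝ) (π : S → ℝ) (t : ℕ) : ℝ :=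
  ⨆ η, ⨆ A : Finset S, |∑ ξ ∈ A, ((P ^ t) η ξ - π ξ)|

/-- The total-variation mixing time with precision `ε`. -/
noncomputable def tvMix (P : Matrix S S ℝ) (π : S → ℝ) (ε : ℝ) : ℕ :=
  sInf {t : ℕ | tvDist P π t ≤ ε}

/-- The relaxation time `1/(1-ρ)`, where `ρ` is the largest modulus of the
(complex) eigenvalues of `P` other than `1`. -/
noncomputable def relTime (P : Matrix S S ℝ) : ℝ :=
  (1 - sSup {r : ℝ | ∃ z : ℂ,
      z ≠ 1 ∧ (P.map (fun a : ℝ => (a : ℂ))).charpoly.IsRoot z ∧ r = ‖z‖})⁻¹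

/-- Separation (or total-variation) cutoff for a sequence of chains with distance
functions `d n` and mixing times `ts n`. -/
def HasCutoff (d : ℕ → ℕ → ℝ) (ts : ℕ → ℕ) : Prop :=
  ∀ α : ℝ, 0 ≤ α →
    (α < 1 → Tendsto (fun n => d n ⌊α * (ts n : ℝ)⌋₊) atTop (nhds 1)) ∧
    (1 < α → Tendsto (fun n => d n ⌊α * (ts n : ℝ)⌋₊) atTop (nhds 0))

end ARW
namespace ARW

/-- `P_A(T > t)` where `T` is the hitting time of the target state `z` by the
Markov chain with transition kernel `M` started at `A`. -/
noncomputable def hitTail {S : Type} [Fintype S] [DecidableEq S]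
    (M : S → S → ℝ≥0∞) (z : S) : S → ℕ → ℝ≥0∞
  | A, 0 => if A = z then 0 else 1
  | A, t + 1 => if A = z then 0 else ∑ B, M A B * hitTail M z B t

/-- `E_A[T]`, the expected hitting time of `z` started from `A`. -/
noncomputable def hitMean {S : Type} [Fintype S] [DecidableEq S]
    (M : S → S → ℝ≥0∞) (z : S) (A : S) : ℝ≥0∞ :=
  ∑' t : ℕ, hitTail M z A t

/-- `Var_A(T)`, the variance of the hitting time of `z` started from `A`. -/
noncomputable def hitVar {S : Type} [Fintype S] [DecidableEq S]
    (M : S → S → ℝ≥0∞) (z : S) (A : S) : ℝ≥0∞ :=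
  (∑' t : ℕ, (2 * t + 1) * hitTail M z A t) - (hitMean M z A) ^ 2

/-- The law of a sum of `m` independent Bernoulli random variables with
parameters `p i`, as a measure on `ℝ`. -/
noncomputable def bernoulliSumLaw {m : ℕ} (p : Fin m → ℝ≥0∞) : MeasureTheory.Measure ℝ :=
  ∑ b : Fin m → Bool,
    (∏ i, if b i then p i else 1 - p i) •
      MeasureTheory.Measure.dirac (∑ i, if b i then (1 : ℝ) else 0)

end ARW
namespace ARW

open MeasureTheory

private lemma L1 {m : ℕ} (p : Fin m → ℝ≥0∞) (hp : ∀ i, p i ≤ 1) (c : ℝ) :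
    ∫⁻ x, ENNReal.ofReal (Real.exp (c * x)) ∂(bernoulliSumLaw p)
      ≤ ENNReal.ofReal (Real.exp ((Real.exp c - 1) * (∑ i, p i).toReal)) := by
  have htop : ∀ i, p i ≠ ∞ := fun i => (lt_of_le_of_lt (hp i) (by simp)).ne
  have key : ∫⁻ x, ENNReal.ofReal (Real.exp (c * x)) ∂(bernoulliSumLaw p)
      = ∏ i, ((1 - p i) + p i * ENNReal.ofReal (Real.exp c)) := by
    rw [bernoulliSumLaw, lintegral_finset_sum_measure]
    simp only [lintegral_smul_measure, lintegral_dirac, smul_eq_mul]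
    have step : ∀ b : Fin m → Bool,
        (∏ i, if b i then p i else 1 - p i) *
          ENNReal.ofReal (Real.exp (c * ∑ i, if b i then (1:ℝ) else 0))
        = ∏ i, (if b i then p i * ENNReal.ofReal (Real.exp c) else (1 - p i)) := by
      intro b
      have : Real.exp (c * ∑ i, if b i then (1:ℝ) else 0)
          = ∏ i, (if b i then Real.exp c else 1) := by
        rw [Finset.mul_sum, Real.exp_sum]
        refine Finset.prod_congr rfl fun i _ => ?_
        by_cases h : b i <;> simp [h]
      rw [this, ENNReal.ofReal_prod_of_nonneg (fun i _ => by positivity),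
        ← Finset.prod_mul_distrib]
      refine Finset.prod_congr rfl fun i _ => ?_
      by_cases h : b i <;> simp [h]
    rw [Finset.sum_congr rfl fun b _ => step b]
    rw [show (fun i : Fin m => (1 - p i) + p i * ENNReal.ofReal (Real.exp c))
        = fun i : Fin m => ∑ t ∈ (Finset.univ : Finset Bool),
            (if t then p i * ENNReal.ofReal (Real.exp c) else (1 - p i)) from
      funext fun i => by simp [Fintype.sum_bool, add_comm]]
    rw [Finset.prod_univ_sum]
    refine (Finset.sum_nbij' (fun b => b) (fun b => b) ?_ ?_ ?_ ?_ ?_).symm <;>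
      simp [Fintype.mem_piFinset]
  rw [key]
  have hfac : ∀ i : Fin m, (1 - p i) + p i * ENNReal.ofReal (Real.exp c)
      ≤ ENNReal.ofReal (Real.exp ((Real.exp c - 1) * (p i).toReal)) := by
    intro i
    set r := (p i).toReal with hr
    have hr0 : 0 ≤ r := ENNReal.toReal_nonneg
    have hr1 : r ≤ 1 := by
      have := ENNReal.toReal_mono (by simp) (hp i)
      simpa using this
    have hpi : p i = ENNReal.ofReal r := (ENNReal.ofReal_toReal (htop i)).symm
    rw [hpi, show (1:ℝ≥0∞) = ENNReal.ofReal 1 by simp, ← ENNReal.ofReal_sub _ hr0,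
      ← ENNReal.ofReal_mul hr0, ← ENNReal.ofReal_add (by linarith) (by positivity)]
    refine ENNReal.ofReal_le_ofReal ?_
    have := Real.add_one_le_exp ((Real.exp c - 1) * r)
    nlinarith [this]
  calc ∏ i, ((1 - p i) + p i * ENNReal.ofReal (Real.exp c))
      ≤ ∏ i, ENNReal.ofReal (Real.exp ((Real.exp c - 1) * (p i).toReal)) :=
        Finset.prod_le_prod' fun i _ => hfac i
    _ = ENNReal.ofReal (Real.exp ((Real.exp c - 1) * (∑ i, p i).toReal)) := by
        rw [← ENNReal.ofReal_prod_of_nonneg (fun i _ => by positivity), ← Real.exp_sum,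
          ← Finset.mul_sum, ENNReal.toReal_sum (fun i _ => htop i)]

private lemma L2 {Ω : Type} [MeasurableSpace Ω] (μ : Measure Ω) [IsProbabilityMeasure μ]
    (U V : Ω → ℝ) (hUm : Measurable U) (hVm : Measurable V)
    {m₁ m₂ : ℕ} (p : Fin m₁ → ℝ≥0∞) (q : Fin m₂ → ℝ≥0∞)
    (hp : ∀ i, p i ≤ 1) (hq : ∀ i, q i ≤ 1)
    (hU : μ.map U = bernoulliSumLaw p)
    (hV : μ.map V = bernoulliSumLaw q)
    (θ : ℝ) (hθ : 0 ≤ θ) :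
    μ {ω | V ω ≤ U ω} ≤ ENNReal.ofReal (Real.exp
      (((Real.exp (2*θ) - 1) * (∑ i, p i).toReal
        + (Real.exp (-(2*θ)) - 1) * (∑ i, q i).toReal) / 2)) := by
  set f : Ω → ℝ≥0∞ := fun ω => ENNReal.ofReal (Real.exp (θ * U ω)) with hf
  set g : Ω → ℝ≥0∞ := fun ω => ENNReal.ofReal (Real.exp (-(θ * V ω))) with hg
  have hfm : Measurable f := ENNReal.measurable_ofReal.comp (Real.measurable_exp.comp (hUm.const_mul θ))
  have hgm : Measurable g := ENNReal.measurable_ofReal.comp (Real.measurable_exp.comp ((hVm.const_mul θ).neg))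
  have h1 : μ {ω | V ω ≤ U ω} ≤ ∫⁻ ω, (f * g) ω ∂μ := by
    have hs : MeasurableSet {ω | V ω ≤ U ω} := measurableSet_le hVm hUm
    calc μ {ω | V ω ≤ U ω} = ∫⁻ ω in {ω | V ω ≤ U ω}, 1 ∂μ := (setLIntegral_one _).symm
      _ ≤ ∫⁻ ω in {ω | V ω ≤ U ω}, (f * g) ω ∂μ := by
          refine setLIntegral_mono' hs fun ω hω => ?_
          simp only [hf, hg, Pi.mul_apply]
          rw [← ENNReal.ofReal_mul (Real.exp_nonneg _), ← Real.exp_add,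
            show (1:ℝ≥0∞) = ENNReal.ofReal 1 by simp]
          refine ENNReal.ofReal_le_ofReal ?_
          rw [← Real.exp_zero]
          refine Real.exp_le_exp.2 ?_
          have : V ω ≤ U ω := hω
          nlinarith
      _ ≤ ∫⁻ ω, (f * g) ω ∂μ := setLIntegral_le_lintegral _ _
  have hconj : (2:ℝ).HolderConjugate 2 := by
    constructor <;> norm_num
  have h2 := ENNReal.lintegral_mul_le_Lp_mul_Lq μ hconj hfm.aemeasurable hgm.aemeasurable
  have hF : ∫⁻ ω, f ω ^ (2:ℝ) ∂μ ≤ ENNReal.ofReal (Real.exp ((Real.exp (2*θ) - 1) * (∑ i, p i).toReal)) := by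
    have : ∀ ω, f ω ^ (2:ℝ) = ENNReal.ofReal (Real.exp ((2*θ) * U ω)) := by
      intro ω
      rw [hf]
      rw [ENNReal.ofReal_rpow_of_pos (Real.exp_pos _), ← Real.exp_mul]
      ring_nf
    simp only [this]
    rw [← lintegral_map (f := fun x : ℝ => ENNReal.ofReal (Real.exp (2 * θ * x)))
      (ENNReal.measurable_ofReal.comp (Real.measurable_exp.comp (measurable_id.const_mul (2 * θ)))) hUm, hU]
    exact L1 p hp _
  have hG : ∫⁻ ω, g ω ^ (2:ℝ) ∂μ ≤ ENNReal.ofReal (Real.exp ((Real.exp (-(2*θ)) - 1) * (∑ i, q i).toReal)) := by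
    have : ∀ ω, g ω ^ (2:ℝ) = ENNReal.ofReal (Real.exp ((-(2*θ)) * V ω)) := by
      intro ω
      rw [hg]
      rw [ENNReal.ofReal_rpow_of_pos (Real.exp_pos _), ← Real.exp_mul]
      ring_nf
    simp only [this]
    rw [← lintegral_map (f := fun x : ℝ => ENNReal.ofReal (Real.exp (-(2 * θ) * x)))
      (ENNReal.measurable_ofReal.comp (Real.measurable_exp.comp (measurable_id.const_mul (-(2 * θ))))) hVm, hV]
    exact L1 q hq _
  have h3 : (∫⁻ ω, f ω ^ (2:ℝ) ∂μ) ^ (1/(2:ℝ)) * (∫⁻ ω, g ω ^ (2:ℝ) ∂μ) ^ (1/(2:ℝ))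
      ≤ ENNReal.ofReal (Real.exp
      (((Real.exp (2*θ) - 1) * (∑ i, p i).toReal
        + (Real.exp (-(2*θ)) - 1) * (∑ i, q i).toReal) / 2)) := by
    calc (∫⁻ ω, f ω ^ (2:ℝ) ∂μ) ^ (1/(2:ℝ)) * (∫⁻ ω, g ω ^ (2:ℝ) ∂μ) ^ (1/(2:ℝ))
        ≤ (ENNReal.ofReal (Real.exp ((Real.exp (2*θ) - 1) * (∑ i, p i).toReal))) ^ (1/(2:ℝ))
          * (ENNReal.ofReal (Real.exp ((Real.exp (-(2*θ)) - 1) * (∑ i, q i).toReal))) ^ (1/(2:ℝ)) :=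
          mul_le_mul' (ENNReal.rpow_le_rpow hF (by norm_num)) (ENNReal.rpow_le_rpow hG (by norm_num))
      _ = _ := by
          rw [ENNReal.ofReal_rpow_of_pos (Real.exp_pos _),
            ENNReal.ofReal_rpow_of_pos (Real.exp_pos _),
            ← Real.exp_mul, ← Real.exp_mul,
            ← ENNReal.ofReal_mul (Real.exp_nonneg _), ← Real.exp_add]
          ring_nf
  exact h1.trans (h2.trans h3)

/-- **Lemma (Probability of an unexpected win).**  Let `U` and `V` be jointly defined
random variables, each marginally distributed as a sum of independent Bernoulli
variables (with parameters `p` and `q` respectively), with `E[U] ≤ E[V]`.  Then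
`P(V ≤ U) ≤ 2 exp(−(√E[V] − √E[U])² / (1+√2))`. -/
theorem bernoulli_sums_unexpected_win
    {Ω : Type} [MeasurableSpace Ω] (μ : Measure Ω) [IsProbabilityMeasure μ]
    (U V : Ω → ℝ) (hUm : Measurable U) (hVm : Measurable V)
    {m₁ m₂ : ℕ} (p : Fin m₁ → ℝ≥0∞) (q : Fin m₂ → ℝ≥0∞)
    (hp : ∀ i, p i ≤ 1) (hq : ∀ i, q i ≤ 1)
    (hU : μ.map U = bernoulliSumLaw p)
    (hV : μ.map V = bernoulliSumLaw q)
    (hmean : ∑ i, p i ≤ ∑ i, q i) :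
    μ {ω | V ω ≤ U ω}
      ≤ ENNReal.ofReal (2 * Real.exp
          (-((Real.sqrt (∑ i, q i).toReal - Real.sqrt (∑ i, p i).toReal) ^ 2
              / (1 + Real.sqrt 2)))) := by
  set l1 := (∑ i, p i).toReal with hl1
  set l2 := (∑ i, q i).toReal with hl2
  have h1 : 0 ≤ l1 := ENNReal.toReal_nonneg
  have h2 : 0 ≤ l2 := ENNReal.toReal_nonneg
  have hqtop : (∑ i, q i) ≠ ⊤ := by
    refine (lt_of_le_of_lt (le_trans (Finset.sum_le_sum fun i _ => hq i) ?_)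
      (by simp : (m₂:ℝ≥0∞) < ⊤)).ne
    simp
  have hl : l1 ≤ l2 := ENNReal.toReal_mono hqtop hmean
  set a := Real.sqrt l1 with haa
  set b := Real.sqrt l2 with hbb
  have hab : a ≤ b := Real.sqrt_le_sqrt hl
  have ha2 : a ^ 2 = l1 := Real.sq_sqrt h1
  have hb2 : b ^ 2 = l2 := Real.sq_sqrt h2
  have hs2 : Real.sqrt 2 ^ 2 = 2 := Real.sq_sqrt (by norm_num)
  have hs2n : 0 ≤ Real.sqrt 2 := Real.sqrt_nonneg 2
  have hs1 : (1:ℝ) ≤ Real.sqrt 2 := by nlinarith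
  have hpos : (0:ℝ) < 1 + Real.sqrt 2 := by linarith
  by_cases ha : l1 = 0
  · -- a = 0 case
    have haz : a = 0 := by rw [haa, ha, Real.sqrt_zero]
    have key := L2 μ U V hUm hVm p q hp hq hU hV (Real.log 100 / 2)
      (by positivity)
    rw [show 2 * (Real.log 100 / 2) = Real.log 100 by ring] at key
    rw [Real.exp_neg, Real.exp_log (by norm_num)] at key
    refine key.trans (ENNReal.ofReal_le_ofReal ?_)
    rw [← hl1, ← hl2, ha, haz]
    have hsge : (101/99:ℝ) ≤ Real.sqrt 2 := by nlinarith [hs2, hs2n]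
    have hexp : ((100 - 1) * 0 + ((100:ℝ)⁻¹ - 1) * l2)/2 ≤ -((b - 0)^2 / (1 + Real.sqrt 2)) := by
      rw [sub_zero, hb2]
      have hd : l2 / (1 + Real.sqrt 2) ≤ 99/200 * l2 := by
        rw [div_le_iff₀ hpos]
        nlinarith [mul_nonneg h2 (sub_nonneg.2 hsge)]
      linarith
    calc Real.exp (((100 - 1) * 0 + ((100:ℝ)⁻¹ - 1) * l2)/2)
        ≤ Real.exp (-((b - 0)^2 / (1 + Real.sqrt 2))) := Real.exp_le_exp.2 hexp
      _ ≤ 2 * _ := by nlinarith [Real.exp_pos (-((b - 0)^2 / (1 + Real.sqrt 2)))]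
  · -- a > 0 case
    have hl1pos : 0 < l1 := lt_of_le_of_ne h1 (Ne.symm ha)
    have hapos : 0 < a := Real.sqrt_pos.2 hl1pos
    have hbpos : 0 < b := lt_of_lt_of_le hapos hab
    have hba1 : (1:ℝ) ≤ b / a := (one_le_div hapos).2 hab
    have key := L2 μ U V hUm hVm p q hp hq hU hV (Real.log (b/a) / 2)
      (div_nonneg (Real.log_nonneg hba1) (by norm_num))
    rw [show 2 * (Real.log (b/a) / 2) = Real.log (b/a) by ring] at key
    rw [Real.exp_neg, Real.exp_log (by positivity), inv_div] at key
    refine key.trans (ENNReal.ofReal_le_ofReal ?_)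
    rw [← hl1, ← hl2]
    have hE : ((b/a - 1) * l1 + (a/b - 1) * l2)/2 = -((b-a)^2/2) := by
      rw [← ha2, ← hb2]; field_simp; ring
    rw [hE]
    have hexp : -((b-a)^2/2) ≤ -((b - a)^2 / (1 + Real.sqrt 2)) := by
      have hd : (b-a)^2 / (1 + Real.sqrt 2) ≤ (b-a)^2/2 :=
        div_le_div_of_nonneg_left (by positivity) (by norm_num) (by linarith)
      linarith
    calc Real.exp (-((b-a)^2/2)) ≤ Real.exp (-((b - a)^2 / (1 + Real.sqrt 2))) :=
        Real.exp_le_exp.2 hexp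
      _ ≤ 2 * _ := by nlinarith [Real.exp_pos (-((b - a)^2 / (1 + Real.sqrt 2)))]

end ARW
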